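/- arXiv:2309.01358 — 2 statements merged into one kernel-verified Lean document; each statement's English description precedes it below -/
import Mathlib

section
/- Let G be in class B with diam(G) ≥ 4, let B0 be a bridge block of G with cut-vertices v1, v2 satisfying e(v1) ≤ e(v2), and let u be a non-cut-vertex of G in B0. Then: (a) if v1, v2, u all lie in partite set V1(B0), then e(u) = e(v2); (b) if v1, v2 lie in V1(B0) and u lies in V2(B0), then e(u) = e(v2) − 1; (c) if v1, u lie in V1(B0) and v2 lies in V2(B0), then e(u) = e(v2) + 1; (d) if v1 lies in V1(B0) and v2, u lie in V2(B0), then e(u) = e(v1) + 1. -/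
open SimpleGraph

variable {V : Type*}

/-- `v` is a cut-vertex of the graph `G`: deleting `v` disconnects `G`. -/
def CutVtx (G : SimpleGraph V) (v : V) : Prop :=
  ¬ (G.induce {v}ᶜ).Connected

/-- A nonseparable graph: connected and with no cut-vertex. -/
def NoCutVtx {W : Type*} (H : SimpleGraph W) : Prop :=
  H.Connected ∧ ∀ w : W, (H.induce {w}ᶜ).Connected

/-- `B` is (the vertex set of) a block of `G`: a maximal nonseparable
induced subgraph. -/
def IsBlockSet (G : SimpleGraph V) (B : Set V) : Prop :=
  NoCutVtx (G.induce B) ∧ ∀ C : Set V, B ⊆ C → NoCutVtx (G.induce C) → B = C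

/-- The set of cut-vertices of `G`. -/
def cutSet (G : SimpleGraph V) : Set V := {v | CutVtx G v}

/-- The set `B` induces a complete bipartite graph in `G` with
bipartition `(V1, V2)`. -/
def CompBipOn (G : SimpleGraph V) (B V1 V2 : Set V) : Prop :=
  V1.Nonempty ∧ V2.Nonempty ∧ Disjoint V1 V2 ∧ V1 ∪ V2 = B ∧
    ∀ x ∈ B, ∀ y ∈ B, (G.Adj x y ↔ (x ∈ V1 ∧ y ∈ V2) ∨ (x ∈ V2 ∧ y ∈ V1))

/-- A bi-block graph: a connected graph all of whose blocks are
complete bipartite. -/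
def BiBlockGraph (G : SimpleGraph V) : Prop :=
  G.Connected ∧ ∀ B : Set V, IsBlockSet G B → ∃ V1 V2 : Set V, CompBipOn G B V1 V2

/-- The class 𝓑: bi-block graphs with at least two blocks and at most two
cut-vertices in each block. -/
def ClassB (G : SimpleGraph V) : Prop :=
  BiBlockGraph G ∧
  (∃ B1 B2 : Set V, IsBlockSet G B1 ∧ IsBlockSet G B2 ∧ B1 ≠ B2) ∧
  ∀ B : Set V, IsBlockSet G B → (B ∩ cutSet G).ncard ≤ 2

/-- `S` is an admissible vertex set for the associated tree `T_G`:
it contains all cut-vertices of `G`, both vertices of every `K_{1,1}` block,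
exactly one non-cut-vertex from each partite set of every leaf block,
exactly one non-cut-vertex from the cut-vertex-free partite set of every
bridge block whose two cut-vertices share a partite set, and no other
vertices. -/
def AssocSet (G : SimpleGraph V) (S : Set V) : Prop :=
  (∀ v, CutVtx G v → v ∈ S) ∧
  ∀ B V1 V2 : Set V, IsBlockSet G B → CompBipOn G B V1 V2 →
    ((V1.ncard = 1 ∧ V2.ncard = 1) → B ⊆ S) ∧
    (¬ (V1.ncard = 1 ∧ V2.ncard = 1) →
      (((B ∩ cutSet G).ncard = 1) →
          (S ∩ (V1 \ cutSet G)).ncard = 1 ∧ (S ∩ (V2 \ cutSet G)).ncard = 1) ∧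
      (((B ∩ cutSet G).ncard = 2) →
          (((V1 ∩ cutSet G).ncard = 2) →
              (S ∩ (V2 \ cutSet G)).ncard = 1 ∧ S ∩ (V1 \ cutSet G) = ∅) ∧
          (((V2 ∩ cutSet G).ncard = 2) →
              (S ∩ (V1 \ cutSet G)).ncard = 1 ∧ S ∩ (V2 \ cutSet G) = ∅) ∧
          (((V1 ∩ cutSet G).ncard = 1 ∧ (V2 ∩ cutSet G).ncard = 1) →
              S ∩ (B \ cutSet G) = ∅)))

/-- The eccentricity of a vertex. -/
noncomputable def ecc (G : SimpleGraph V) (v : V) : ℕ := sSup (Set.range (G.dist v))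

/-- The diameter of a graph. -/
noncomputable def gdiam (G : SimpleGraph V) : ℕ := sSup (Set.range (ecc G))

/-- The radius of a graph. -/
noncomputable def gradius (G : SimpleGraph V) : ℕ := sInf (Set.range (ecc G))

/-- The center of a graph: vertices of minimum eccentricity. -/
noncomputable def gcenter (G : SimpleGraph V) : Set V := {v | ecc G v = gradius G}

/-- The eccentricity matrix of `G`. -/
noncomputable def eccMatrix (G : SimpleGraph V) : Matrix V V ℝ := fun u v =>
  if G.dist u v = min (ecc G u) (ecc G v) then (G.dist u v : ℝ) else 0

/-- The spectrum of the eccentricity matrix of `G` is symmetric with respect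
to the origin: `μ` is an eigenvalue with multiplicity `l` iff `-μ` is. -/
def SpectrumSymm [Fintype V] [DecidableEq V] (G : SimpleGraph V) : Prop :=
  ∀ (hH : (eccMatrix G).IsHermitian) (μ : ℝ),
    {i | hH.eigenvalues i = μ}.ncard = {i | hH.eigenvalues i = -μ}.ncard

/-- A vertex is diametrically distinguished if it lies on some diametrical
path and is adjacent to some central vertex. -/
noncomputable def DiamDistinguished (G : SimpleGraph V) (u : V) : Prop :=
  (∃ (a b : V) (p : G.Walk a b), p.IsPath ∧ p.length = G.dist a b ∧
      G.dist a b = gdiam G ∧ u ∈ p.support) ∧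
  ∃ z ∈ gcenter G, G.Adj u z

section Infra
variable {G : SimpleGraph V}

private lemma aux_reach_induce {W : Type*} {H : SimpleGraph W} {S : Set W} :
    ∀ {a b : W} (p : H.Walk a b), (∀ v ∈ p.support, v ∈ S) →
      ∀ (ha : a ∈ S) (hb : b ∈ S), (H.induce S).Reachable ⟨a, ha⟩ ⟨b, hb⟩ := by
  intro a b p
  induction p with
  | nil => intro _ ha hb; rfl
  | @cons a c b h q ih =>
    intro hs ha hb
    have hc : c ∈ S := hs c (by simp)
    have hadj : (H.induce S).Adj ⟨a, ha⟩ ⟨c, hc⟩ := h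
    exact hadj.reachable.trans (ih (fun v hv => hs v (by simp [hv])) hc hb)

private lemma aux_walk_lift {S : Set V} :
    ∀ {a b : V} (p : G.Walk a b), (∀ v ∈ p.support, v ∈ S) →
      ∀ (ha : a ∈ S) (hb : b ∈ S),
      ∃ q : (G.induce S).Walk ⟨a, ha⟩ ⟨b, hb⟩, ∀ x ∈ q.support, (x : V) ∈ p.support := by
  intro a b p
  induction p with
  | nil => intro _ ha hb; exact ⟨Walk.nil, by simp⟩
  | @cons a c b h q ih =>
    intro hs ha hb
    have hc : c ∈ S := hs c (by simp)
    obtain ⟨q', hq'⟩ := ih (fun v hv => hs v (by simp [hv])) hc hb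
    refine ⟨Walk.cons (show (G.induce S).Adj ⟨a, ha⟩ ⟨c, hc⟩ from h) q', ?_⟩
    intro x hx
    rw [Walk.support_cons] at hx
    rcases List.mem_cons.mp hx with h1 | h1
    · subst h1; simp
    · simp [hq' x h1]

private lemma aux_walk_proj {W : Type*} {H : SimpleGraph W} {S : Set W} {a b : ↥S}
    (q : (H.induce S).Walk a b) :
    ∃ p : H.Walk ↑a ↑b, ∀ v ∈ p.support, ∃ x ∈ q.support, ↑x = v := by
  refine ⟨q.map (SimpleGraph.Embedding.induce S).toHom, ?_⟩
  intro v hv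
  have hv2 : v ∈ q.support.map (SimpleGraph.Embedding.induce (G := H) S).toHom := by
    rw [← Walk.support_map]; exact hv
  obtain ⟨x, hx, rfl⟩ := List.mem_map.mp hv2
  exact ⟨x, hx, rfl⟩

/-- Everything phrased with `G`-walks whose support is constrained. -/
private def ConnOnAux (G : SimpleGraph V) (S : Set V) : Prop :=
  ∀ a ∈ S, ∀ b ∈ S, ∃ p : G.Walk a b, ∀ v ∈ p.support, v ∈ S

private lemma aux_noCutVtx_induce {C : Set V} (hCne : C.Nonempty)
    (h2 : ∀ t ∈ C, (C \ {t}).Nonempty)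
    (hconn : ConnOnAux G C) (hdel : ∀ t ∈ C, ConnOnAux G (C \ {t})) :
    NoCutVtx (G.induce C) := by
  constructor
  · obtain ⟨c0, hc0⟩ := hCne
    have : Nonempty ↥C := ⟨⟨c0, hc0⟩⟩
    refine SimpleGraph.Connected.mk ?_
    rintro ⟨a, ha⟩ ⟨b, hb⟩
    obtain ⟨p, hp⟩ := hconn a ha b hb
    exact aux_reach_induce (H := G) p hp ha hb
  · intro w
    obtain ⟨t', ht'⟩ := h2 ↑w w.2
    have hmem : (⟨t', ht'.1⟩ : ↥C) ∈ ({w}ᶜ : Set ↥C) := by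
      simp only [Set.mem_compl_iff, Set.mem_singleton_iff]
      intro h; exact ht'.2 (congrArg Subtype.val h)
    have : Nonempty ↥({w}ᶜ : Set ↥C) := ⟨⟨_, hmem⟩⟩
    refine SimpleGraph.Connected.mk ?_
    rintro ⟨⟨a, haC⟩, ha⟩ ⟨⟨b, hbC⟩, hb⟩
    have ha' : a ∈ C \ {↑w} := ⟨haC, fun h => by
      simp only [Set.mem_compl_iff, Set.mem_singleton_iff] at ha
      exact ha (Subtype.ext h)⟩
    have hb' : b ∈ C \ {↑w} := ⟨hbC, fun h => by
      simp only [Set.mem_compl_iff, Set.mem_singleton_iff] at hb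
      exact hb (Subtype.ext h)⟩
    obtain ⟨p, hp⟩ := hdel ↑w w.2 a ha' b hb'
    obtain ⟨q, hq⟩ := aux_walk_lift p (fun v hv => (hp v hv).1) haC hbC
    have hqS : ∀ z ∈ q.support, z ∈ ({w}ᶜ : Set ↥C) := by
      intro z hz
      have := (hp ↑z (hq z hz)).2
      simp only [Set.mem_compl_iff, Set.mem_singleton_iff]
      exact fun h => this (congrArg Subtype.val h)
    exact aux_reach_induce (H := G.induce C) q hqS ha hb

private lemma aux_connOn_of_block {B : Set V} (h : NoCutVtx (G.induce B)) :
    ConnOnAux G B := by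
  intro a ha b hb
  obtain ⟨p0⟩ := h.1.preconnected ⟨a, ha⟩ ⟨b, hb⟩
  obtain ⟨p, hp⟩ := aux_walk_proj p0
  exact ⟨p, fun v hv => by obtain ⟨x, _, rfl⟩ := hp v hv; exact x.2⟩

private lemma aux_connOn_of_block_del {B : Set V} (h : NoCutVtx (G.induce B))
    {t : V} (ht : t ∈ B) : ConnOnAux G (B \ {t}) := by
  intro a ha b hb
  have hconn := h.2 ⟨t, ht⟩
  have hax : (⟨a, ha.1⟩ : ↥B) ∈ ({(⟨t, ht⟩ : ↥B)}ᶜ : Set ↥B) := by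
    simp only [Set.mem_compl_iff, Set.mem_singleton_iff]
    intro h'; exact ha.2 (congrArg Subtype.val h')
  have hbx : (⟨b, hb.1⟩ : ↥B) ∈ ({(⟨t, ht⟩ : ↥B)}ᶜ : Set ↥B) := by
    simp only [Set.mem_compl_iff, Set.mem_singleton_iff]
    intro h'; exact hb.2 (congrArg Subtype.val h')
  obtain ⟨q⟩ := hconn.preconnected ⟨_, hax⟩ ⟨_, hbx⟩
  obtain ⟨p1, hp1⟩ := aux_walk_proj q
  obtain ⟨p, hp⟩ := aux_walk_proj p1
  refine ⟨p, fun v hv => ?_⟩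
  obtain ⟨x, hx, rfl⟩ := hp v hv
  refine ⟨(x : ↥B).2, fun hcontra => ?_⟩
  obtain ⟨y, hy, rfl⟩ := hp1 ↑x hx
  have := y.2
  simp only [Set.mem_compl_iff, Set.mem_singleton_iff] at this
  exact this (Subtype.ext hcontra)

end Infra
section Surgery
variable {G : SimpleGraph V} {B0 : Set V}

private lemma aux_firstHit :
    ∀ {x b : V} (p : G.Walk x b), x ∉ B0 → b ∈ B0 →
      ∃ (z : V) (q : G.Walk x z), z ∈ B0 ∧ (∀ t ∈ q.support, t ∈ p.support) ∧
        (∀ t ∈ q.support, t ≠ z → t ∉ B0) := by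
  intro x b p
  induction p with
  | nil => intro hx hb; exact absurd hb hx
  | @cons a c b h q ih =>
    intro hx hb
    by_cases hc : c ∈ B0
    · refine ⟨c, Walk.cons h Walk.nil, hc, ?_, ?_⟩
      · intro t ht; simp at ht; rcases ht with rfl | rfl <;> simp
      · intro t ht htc; simp at ht; rcases ht with rfl | rfl
        · exact hx
        · exact absurd rfl htc
    · obtain ⟨z, q', hz, hsub, hout⟩ := ih hc hb
      refine ⟨z, Walk.cons h q', hz, ?_, ?_⟩
      · intro t ht; rw [Walk.support_cons] at ht
        rcases List.mem_cons.mp ht with rfl | ht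
        · simp
        · simp [hsub t ht]
      · intro t ht htz; rw [Walk.support_cons] at ht
        rcases List.mem_cons.mp ht with rfl | ht
        · exact hx
        · exact hout t ht htz

private lemma aux_exists_concat :
    ∀ {x z : V} (S : G.Walk x z), S.IsPath → x ≠ z →
      ∃ (w1 : V) (P : G.Walk x w1), P.IsPath ∧ G.Adj w1 z ∧
        (∀ v ∈ P.support, v ∈ S.support ∧ v ≠ z) := by
  intro x z S
  induction S with
  | nil => intro _ hxz; exact absurd rfl hxz
  | @cons a c b h q ih =>
    intro hS hxz
    by_cases hcb : c = b
    · subst hcb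
      refine ⟨a, Walk.nil, by simp, h, ?_⟩
      intro v hv; simp at hv; subst hv; exact ⟨by simp, hxz⟩
    · have hq : q.IsPath := hS.of_cons
      obtain ⟨w1, P, hP, hadj, hsup⟩ := ih hq hcb
      have haq : a ∉ q.support := (Walk.cons_isPath_iff _ _).mp hS |>.2
      refine ⟨w1, Walk.cons h P, ?_, hadj, ?_⟩
      · rw [Walk.cons_isPath_iff]
        exact ⟨hP, fun hc => haq ((hsup a hc).1)⟩
      · intro v hv; rw [Walk.support_cons] at hv
        rcases List.mem_cons.mp hv with rfl | hv
        · exact ⟨by simp, hxz⟩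
        · exact ⟨by simp [(hsup v hv).1], (hsup v hv).2⟩

/-- extract from any walk leaving `B0` a path attached to `B0` at its far end. -/
private lemma aux_exitPath {x b : V} (W : G.Walk x b) (hx : x ∉ B0) (hb : b ∈ B0) :
    ∃ (z w1 : V) (P : G.Walk x w1), P.IsPath ∧ G.Adj w1 z ∧ z ∈ B0 ∧
      z ∈ W.support ∧ (∀ v ∈ P.support, v ∈ W.support ∧ v ∉ B0) := by
  classical
  obtain ⟨z, q, hz, hsub, hout⟩ := aux_firstHit W hx hb
  have hxz : x ≠ z := fun h => hx (h ▸ hz)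
  have hq' : q.bypass.IsPath := Walk.bypass_isPath q
  obtain ⟨w1, P, hP, hadj, hsup⟩ := aux_exists_concat q.bypass hq' hxz
  refine ⟨z, w1, P, hP, hadj, hz, hsub z q.end_mem_support, ?_⟩
  intro v hv
  have h1 : v ∈ q.support := q.support_bypass_subset (hsup v hv).1
  exact ⟨hsub v h1, hout v h1 (hsup v hv).2⟩

end Surgery
section Escape
variable {G : SimpleGraph V}

private lemma aux_path_loop {v : V} (p : G.Walk v v) (hp : p.IsPath) :
    p.support = [v] := by
  cases p with
  | nil => simp
  | cons h q =>
    exfalso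
    exact ((Walk.cons_isPath_iff _ _).mp hp).2 q.end_mem_support

private lemma aux_not_in_dropUntil [DecidableEq V] {s e : V} (D : G.Walk s e)
    (hD : D.support.Nodup) {a : V} (ha : a ∈ D.support) (has : a ≠ s) :
    s ∉ (D.dropUntil a ha).support := by
  have hsupp : D.support = (D.takeUntil a ha).support ++ (D.dropUntil a ha).support.tail := by
    rw [← Walk.support_append, D.take_spec ha]
  rw [hsupp] at hD
  have hdisj := (List.nodup_append.mp hD).2.2
  intro hs
  have hs' : s ∈ (D.dropUntil a ha).support.tail := by
    have hc := (D.dropUntil a ha).support_eq_cons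
    rw [hc] at hs
    rcases List.mem_cons.mp hs with h | h
    · exact absurd h.symm has
    · exact h
  exact hdisj _ (Walk.start_mem_support _) _ hs' rfl

private lemma aux_not_in_takeUntil [DecidableEq V] {s e : V} (T : G.Walk s e)
    (hT : T.support.Nodup) {a : V} (ha : a ∈ T.support) (hae : a ≠ e) :
    e ∉ (T.takeUntil a ha).support := by
  have hsupp : T.support = (T.takeUntil a ha).support ++ (T.dropUntil a ha).support.tail := by
    rw [← Walk.support_append, T.take_spec ha]
  rw [hsupp] at hT
  have hdisj := (List.nodup_append.mp hT).2.2
  intro he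
  have he' : e ∈ (T.dropUntil a ha).support.tail := by
    have hc := (T.dropUntil a ha).support_eq_cons
    have hmem : e ∈ (T.dropUntil a ha).support := Walk.end_mem_support _
    rw [hc] at hmem
    rcases List.mem_cons.mp hmem with h | h
    · exact absurd h.symm hae
    · exact h
  exact hdisj _ he _ he' rfl

private lemma aux_escape_side {B0 : Set V}
    {p0 w1 w2 z1 z2 : V}
    (hz1 : z1 ∈ B0) (hz2 : z2 ∈ B0) (hz12 : z1 ≠ z2)
    (P : G.Walk p0 w1) (Q : G.Walk p0 w2) (hP : P.IsPath) (hQ : Q.IsPath)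
    (hPB : ∀ v ∈ P.support, v ∉ B0) (hQB : ∀ v ∈ Q.support, v ∉ B0)
    (ha1 : G.Adj w1 z1) (ha2 : G.Adj w2 z2)
    (hdisj : ∀ v, v ∈ P.support → v ∈ Q.support → v = p0)
    (t a : V) (haP : a ∈ P.support) (hat : a ≠ t) :
    ∃ b, b ∈ B0 ∧ b ≠ t ∧ ∃ p : G.Walk a b,
      ∀ v ∈ p.support, (v ∈ B0 ∨ v ∈ P.support ∨ v ∈ Q.support) ∧ v ≠ t := by
  classical
  by_cases htP : t ∈ P.support
  · have htB : t ∉ B0 := hPB t htP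
    have htz1 : t ≠ z1 := fun h => htB (h ▸ hz1)
    have htz2 : t ≠ z2 := fun h => htB (h ▸ hz2)
    have hsupp : P.support = (P.takeUntil t htP).support ++ (P.dropUntil t htP).support.tail := by
      rw [← Walk.support_append, P.take_spec htP]
    have haP' := haP
    rw [hsupp] at haP'
    rcases List.mem_append.mp haP' with haT | haD
    · -- a on the segment from p0 to t : escape through p0 and Q
      set T := P.takeUntil t htP with hT
      have hTpath : T.IsPath := hP.takeUntil htP
      have htp0 : t ≠ p0 := by
        intro h
        subst h
        have hTs : T.support = [t] := aux_path_loop T hTpath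
        rw [hTs] at haT
        exact hat (List.mem_singleton.mp haT)
      have htQ : t ∉ Q.support := fun h => htp0 (hdisj t htP h)
      have htT1 : t ∉ (T.takeUntil a haT).support :=
        aux_not_in_takeUntil T hTpath.support_nodup haT hat
      refine ⟨z2, hz2, (Ne.symm htz2), ((T.takeUntil a haT).reverse.append (Q.concat ha2)), ?_⟩
      intro v hv
      rcases (Walk.mem_support_append_iff _ _).mp hv with hv1 | hv2
      · rw [Walk.support_reverse, List.mem_reverse] at hv1
        have hvP : v ∈ P.support :=
          P.support_takeUntil_subset htP (T.support_takeUntil_subset haT hv1)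
        exact ⟨Or.inr (Or.inl hvP), fun h => htT1 (h ▸ hv1)⟩
      · rw [Walk.support_concat, List.mem_append] at hv2
        rcases hv2 with hv2 | hv2
        · exact ⟨Or.inr (Or.inr hv2), fun h => htQ (h ▸ hv2)⟩
        · have : v = z2 := List.mem_singleton.mp hv2
          subst this
          exact ⟨Or.inl hz2, Ne.symm htz2⟩
    · -- a on the segment from t to w1 : escape through w1 to z1
      have haD' : a ∈ (P.dropUntil t htP).support := List.mem_of_mem_tail haD
      set D := P.dropUntil t htP with hD
      have hDpath : D.IsPath := hP.dropUntil htP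
      have hDsub : ∀ v ∈ D.support, v ∈ P.support := by
        intro v hv
        have hc := D.support_eq_cons
        rw [hc] at hv
        rcases List.mem_cons.mp hv with rfl | hv
        · exact htP
        · rw [hsupp]; exact List.mem_append.mpr (Or.inr hv)
      have htD1 : t ∉ (D.dropUntil a haD').support :=
        aux_not_in_dropUntil D hDpath.support_nodup haD' hat
      refine ⟨z1, hz1, Ne.symm htz1, ((D.dropUntil a haD').concat ha1), ?_⟩
      intro v hv
      rw [Walk.support_concat, List.mem_append] at hv
      rcases hv with hv | hv
      · have hvP : v ∈ P.support := hDsub v (D.support_dropUntil_subset haD' hv)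
        exact ⟨Or.inr (Or.inl hvP), fun h => htD1 (h ▸ hv)⟩
      · have : v = z1 := List.mem_singleton.mp hv
        subst this
        exact ⟨Or.inl hz1, Ne.symm htz1⟩
  · by_cases htz1 : t = z1
    · -- t = z1 : escape through p0 and Q to z2
      subst htz1
      refine ⟨z2, hz2, Ne.symm hz12, ((P.takeUntil a haP).reverse.append (Q.concat ha2)), ?_⟩
      intro v hv
      rcases (Walk.mem_support_append_iff _ _).mp hv with hv1 | hv2
      · rw [Walk.support_reverse, List.mem_reverse] at hv1
        have hvP : v ∈ P.support := P.support_takeUntil_subset haP hv1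
        exact ⟨Or.inr (Or.inl hvP), fun h => (hPB v hvP) (h ▸ hz1)⟩
      · rw [Walk.support_concat, List.mem_append] at hv2
        rcases hv2 with hv2 | hv2
        · exact ⟨Or.inr (Or.inr hv2), fun h => (hQB v hv2) (h ▸ hz1)⟩
        · have : v = z2 := List.mem_singleton.mp hv2
          subst this
          exact ⟨Or.inl hz2, Ne.symm hz12⟩
    · -- t ∉ P.support, t ≠ z1 : straightforward escape to z1
      refine ⟨z1, hz1, Ne.symm htz1, ((P.dropUntil a haP).concat ha1), ?_⟩
      intro v hv
      rw [Walk.support_concat, List.mem_append] at hv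
      rcases hv with hv | hv
      · have hvP : v ∈ P.support := P.support_dropUntil_subset haP hv
        exact ⟨Or.inr (Or.inl hvP), fun h => htP (h ▸ hvP)⟩
      · have : v = z1 := List.mem_singleton.mp hv
        subst this
        exact ⟨Or.inl hz1, Ne.symm htz1⟩

end Escape
section Attach
variable {G : SimpleGraph V}

private lemma aux_attach {B0 : Set V} (hB : IsBlockSet G B0)
    {a0 b0 : V} (ha0 : a0 ∈ B0) (hb0 : b0 ∈ B0) (hab0 : a0 ≠ b0)
    {p0 w1 w2 z1 z2 : V} (hp0 : p0 ∉ B0)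
    (hz1 : z1 ∈ B0) (hz2 : z2 ∈ B0) (hz12 : z1 ≠ z2)
    (P : G.Walk p0 w1) (Q : G.Walk p0 w2) (hP : P.IsPath) (hQ : Q.IsPath)
    (hPB : ∀ v ∈ P.support, v ∉ B0) (hQB : ∀ v ∈ Q.support, v ∉ B0)
    (ha1 : G.Adj w1 z1) (ha2 : G.Adj w2 z2)
    (hdisj : ∀ v, v ∈ P.support → v ∈ Q.support → v = p0) : False := by
  classical
  set C : Set V := B0 ∪ {v | v ∈ P.support} ∪ {v | v ∈ Q.support} with hC
  have hCmem : ∀ v, v ∈ C ↔ (v ∈ B0 ∨ v ∈ P.support ∨ v ∈ Q.support) := by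
    intro v
    simp [hC, Set.mem_union, Set.mem_setOf_eq, or_assoc]
  have hB0C : B0 ⊆ C := fun v hv => (hCmem v).mpr (Or.inl hv)
  -- every vertex of C reaches B0 within C
  have reachB : ∀ a ∈ C, ∃ b, b ∈ B0 ∧ ∃ p : G.Walk a b, ∀ v ∈ p.support, v ∈ C := by
    intro a ha
    rcases (hCmem a).mp ha with h | h | h
    · exact ⟨a, h, Walk.nil, by intro v hv; simp at hv; subst hv; exact ha⟩
    · refine ⟨z1, hz1, (P.dropUntil a h).concat ha1, ?_⟩
      intro v hv
      rw [Walk.support_concat, List.mem_append] at hv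
      rcases hv with hv | hv
      · exact (hCmem v).mpr (Or.inr (Or.inl (P.support_dropUntil_subset h hv)))
      · have : v = z1 := List.mem_singleton.mp hv
        subst this; exact hB0C hz1
    · refine ⟨z2, hz2, (Q.dropUntil a h).concat ha2, ?_⟩
      intro v hv
      rw [Walk.support_concat, List.mem_append] at hv
      rcases hv with hv | hv
      · exact (hCmem v).mpr (Or.inr (Or.inr (Q.support_dropUntil_subset h hv)))
      · have : v = z2 := List.mem_singleton.mp hv
        subst this; exact hB0C hz2
  have hblockconn := aux_connOn_of_block hB.1
  have hconn : ConnOnAux G C := by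
    intro a ha b hb
    obtain ⟨ba, hba, pa, hpa⟩ := reachB a ha
    obtain ⟨bb, hbb, pb, hpb⟩ := reachB b hb
    obtain ⟨pm, hpm⟩ := hblockconn ba hba bb hbb
    refine ⟨pa.append (pm.append pb.reverse), ?_⟩
    intro v hv
    rcases (Walk.mem_support_append_iff _ _).mp hv with hv | hv
    · exact hpa v hv
    rcases (Walk.mem_support_append_iff _ _).mp hv with hv | hv
    · exact hB0C (hpm v hv)
    · rw [Walk.support_reverse, List.mem_reverse] at hv
      exact hpb v hv
  have hdel : ∀ t ∈ C, ConnOnAux G (C \ {t}) := by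
    intro t htC
    -- escape within C \ {t} to B0 \ {t}
    have escape : ∀ a, a ∈ C → a ≠ t →
        ∃ b, b ∈ B0 ∧ b ≠ t ∧ ∃ p : G.Walk a b, ∀ v ∈ p.support, v ∈ C ∧ v ≠ t := by
      intro a ha hat
      rcases (hCmem a).mp ha with h | h | h
      · exact ⟨a, h, hat, Walk.nil, by intro v hv; simp at hv; subst hv; exact ⟨ha, hat⟩⟩
      · obtain ⟨b, hb, hbt, p, hp⟩ :=
          aux_escape_side hz1 hz2 hz12 P Q hP hQ hPB hQB ha1 ha2 hdisj t a h hat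
        exact ⟨b, hb, hbt, p, fun v hv => ⟨(hCmem v).mpr (hp v hv).1, (hp v hv).2⟩⟩
      · obtain ⟨b, hb, hbt, p, hp⟩ :=
          aux_escape_side hz2 hz1 (Ne.symm hz12) Q P hQ hP hQB hPB ha2 ha1
            (fun v hv1 hv2 => hdisj v hv2 hv1) t a h hat
        refine ⟨b, hb, hbt, p, fun v hv => ⟨(hCmem v).mpr ?_, (hp v hv).2⟩⟩
        rcases (hp v hv).1 with h' | h' | h'
        · exact Or.inl h'
        · exact Or.inr (Or.inr h')
        · exact Or.inr (Or.inl h')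
    have connB' : ∀ x, x ∈ B0 → x ≠ t → ∀ y, y ∈ B0 → y ≠ t →
        ∃ p : G.Walk x y, ∀ v ∈ p.support, v ∈ C ∧ v ≠ t := by
      intro x hx hxt y hy hyt
      by_cases htB : t ∈ B0
      · obtain ⟨p, hp⟩ := aux_connOn_of_block_del hB.1 htB x ⟨hx, hxt⟩ y ⟨hy, hyt⟩
        exact ⟨p, fun v hv => ⟨hB0C (hp v hv).1, (hp v hv).2⟩⟩
      · obtain ⟨p, hp⟩ := hblockconn x hx y hy
        exact ⟨p, fun v hv => ⟨hB0C (hp v hv), fun h => htB (h ▸ hp v hv)⟩⟩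
    intro a ha b hb
    obtain ⟨ba, hba, hbat, pa, hpa⟩ := escape a ha.1 ha.2
    obtain ⟨bb, hbb, hbbt, pb, hpb⟩ := escape b hb.1 hb.2
    obtain ⟨pm, hpm⟩ := connB' ba hba hbat bb hbb hbbt
    refine ⟨pa.append (pm.append pb.reverse), ?_⟩
    intro v hv
    rcases (Walk.mem_support_append_iff _ _).mp hv with hv | hv
    · exact ⟨(hpa v hv).1, (hpa v hv).2⟩
    rcases (Walk.mem_support_append_iff _ _).mp hv with hv | hv
    · exact ⟨(hpm v hv).1, (hpm v hv).2⟩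
    · rw [Walk.support_reverse, List.mem_reverse] at hv
      exact ⟨(hpb v hv).1, (hpb v hv).2⟩
  have hCne : C.Nonempty := ⟨a0, hB0C ha0⟩
  have h2 : ∀ t ∈ C, (C \ {t}).Nonempty := by
    intro t ht
    by_cases h : t = a0
    · exact ⟨b0, hB0C hb0, by simp [h ▸ hab0.symm]⟩
    · exact ⟨a0, hB0C ha0, by simp [Ne.symm h]⟩
  have hnocut := aux_noCutVtx_induce hCne h2 hconn hdel
  have hBC : B0 = C := hB.2 C hB0C hnocut
  have : p0 ∈ C := (hCmem p0).mpr (Or.inr (Or.inl P.start_mem_support))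
  rw [← hBC] at this
  exact hp0 this

end Attach
section Part2
variable {G : SimpleGraph V}

private lemma aux_edge_cut {B0 : Set V} (hB : IsBlockSet G B0)
    {a0 b0 : V} (ha0 : a0 ∈ B0) (hb0 : b0 ∈ B0) (hab0 : a0 ≠ b0)
    {w y : V} (hw : w ∈ B0) (hy : y ∉ B0) (hadj : G.Adj w y) : CutVtx G w := by
  classical
  by_contra hcut
  rw [CutVtx, not_not] at hcut
  obtain ⟨z0, hz0, hz0w⟩ : ∃ z0, z0 ∈ B0 ∧ z0 ≠ w := by
    by_cases h : w = a0
    · exact ⟨b0, hb0, by simpa [h] using hab0.symm⟩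
    · exact ⟨a0, ha0, fun hh => h hh.symm⟩
  have hyw : y ≠ w := fun h => hy (h ▸ hw)
  have hyc : y ∈ ({w}ᶜ : Set V) := by simpa using hyw
  have hz0c : z0 ∈ ({w}ᶜ : Set V) := by simpa using hz0w
  obtain ⟨q⟩ := hcut.preconnected ⟨y, hyc⟩ ⟨z0, hz0c⟩
  obtain ⟨p, hp⟩ := aux_walk_proj q
  have hpsup : ∀ v ∈ p.support, v ≠ w := by
    intro v hv
    obtain ⟨x, _, rfl⟩ := hp v hv
    have hx2 := x.2
    simp only [Set.mem_compl_iff, Set.mem_singleton_iff] at hx2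
    exact hx2
  obtain ⟨z2, w2, Qp, hQp, haq, hz2B, hz2sup, hQsup⟩ := aux_exitPath p hy hz0
  have hz2w : z2 ≠ w := hpsup z2 hz2sup
  exact aux_attach hB ha0 hb0 hab0 hy hw hz2B (Ne.symm hz2w)
    (Walk.nil : G.Walk y y) Qp (by simp) hQp
    (by intro v hv; simp at hv; subst hv; exact hy)
    (fun v hv => (hQsup v hv).2) hadj.symm haq
    (by intro v hv _; simp at hv; exact hv)

private lemma aux_no_double {B0 : Set V} (hB : IsBlockSet G B0)
    {a0 b0 : V} (ha0 : a0 ∈ B0) (hb0 : b0 ∈ B0) (hab0 : a0 ≠ b0)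
    {z1 z2 : V} (hz1 : z1 ∈ B0) (hz2 : z2 ∈ B0) (hz12 : z1 ≠ z2) :
    ∀ n : ℕ, ∀ {p0 w1 w2 : V} (P : G.Walk p0 w1) (Q : G.Walk p0 w2),
      P.length + Q.length ≤ n → p0 ∉ B0 → P.IsPath → Q.IsPath →
      (∀ v ∈ P.support, v ∉ B0) → (∀ v ∈ Q.support, v ∉ B0) →
      G.Adj w1 z1 → G.Adj w2 z2 → False := by
  classical
  intro n
  induction n using Nat.strong_induction_on with
  | _ n ih =>
    intro p0 w1 w2 P Q hlen hp0 hP hQ hPB hQB ha1 ha2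
    by_cases hc : ∃ c, c ∈ P.support ∧ c ∈ Q.support ∧ c ≠ p0
    · obtain ⟨c, hcP, hcQ, hcp0⟩ := hc
      have hcB : c ∉ B0 := hPB c hcP
      have hlt : (P.dropUntil c hcP).length + (Q.dropUntil c hcQ).length < n := by
        have h1 := congrArg Walk.length (P.take_spec hcP)
        rw [Walk.length_append] at h1
        have h2 : (P.takeUntil c hcP).length ≠ 0 := by
          intro h; exact hcp0 (Walk.eq_of_length_eq_zero h).symm
        have h3 := Q.length_dropUntil_le hcQ
        omega
      exact ih _ hlt (P.dropUntil c hcP) (Q.dropUntil c hcQ) (le_refl _) hcB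
        (hP.dropUntil hcP) (hQ.dropUntil hcQ)
        (fun v hv => hPB v (P.support_dropUntil_subset hcP hv))
        (fun v hv => hQB v (Q.support_dropUntil_subset hcQ hv)) ha1 ha2
    · push_neg at hc
      exact aux_attach hB ha0 hb0 hab0 hp0 hz1 hz2 hz12 P Q hP hQ hPB hQB ha1 ha2
        (fun v h1 h2 => hc v h1 h2)

private lemma aux_partition {B0 : Set V} (hB : IsBlockSet G B0)
    {v1 v2 : V} (hv1 : v1 ∈ B0) (hv2 : v2 ∈ B0) (hne : v1 ≠ v2)
    (hcutonly : ∀ z, z ∈ B0 → CutVtx G z → z = v1 ∨ z = v2)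
    {x : V} (hx : x ∉ B0)
    (h1 : ¬ ∀ p : G.Walk x v2, v1 ∈ p.support) :
    ∀ p : G.Walk x v1, v2 ∈ p.support := by
  classical
  by_contra h2
  push_neg at h1 h2
  obtain ⟨W1, hW1⟩ := h1
  obtain ⟨W2, hW2⟩ := h2
  obtain ⟨za, wa, Pa, hPa, haa, hzaB, hzasup, hPasup⟩ := aux_exitPath W1 hx hv2
  have hwaB : wa ∉ B0 := (hPasup wa Pa.end_mem_support).2
  have hzacut : CutVtx G za := aux_edge_cut hB hv1 hv2 hne hzaB hwaB haa.symm
  have hza : za = v2 := by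
    rcases hcutonly za hzaB hzacut with h | h
    · exact absurd (h ▸ hzasup) hW1
    · exact h
  obtain ⟨zb, wb, Pb, hPb, hab, hzbB, hzbsup, hPbsup⟩ := aux_exitPath W2 hx hv1
  have hwbB : wb ∉ B0 := (hPbsup wb Pb.end_mem_support).2
  have hzbcut : CutVtx G zb := aux_edge_cut hB hv1 hv2 hne hzbB hwbB hab.symm
  have hzb : zb = v1 := by
    rcases hcutonly zb hzbB hzbcut with h | h
    · exact h
    · exact absurd (h ▸ hzbsup) hW2
  rw [hza] at haa
  rw [hzb] at hab
  exact aux_no_double hB hv1 hv2 hne hv2 hv1 hne.symm (Pa.length + Pb.length) Pa Pb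
    (le_refl _) hx hPa hPb (fun v hv => (hPasup v hv).2) (fun v hv => (hPbsup v hv).2)
    haa hab

private lemma aux_A1_walk {B0 : Set V} (hB : IsBlockSet G B0)
    {v1 v2 : V} (hv1 : v1 ∈ B0) (hv2 : v2 ∈ B0) (hne : v1 ≠ v2)
    (hcutonly : ∀ z, z ∈ B0 → CutVtx G z → z = v1 ∨ z = v2)
    {x : V} (hx : x ∉ B0) (hA : ∀ p : G.Walk x v2, v1 ∈ p.support)
    {w : V} (hw : w ∈ B0) (p : G.Walk x w) : v1 ∈ p.support := by
  classical
  obtain ⟨z, w1, P, hP, hadj, hzB, hzsup, hPsup⟩ := aux_exitPath p hx hw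
  have hw1B : w1 ∉ B0 := (hPsup w1 P.end_mem_support).2
  have hzcut : CutVtx G z := aux_edge_cut hB hv1 hv2 hne hzB hw1B hadj.symm
  rcases hcutonly z hzB hzcut with h | h
  · exact h ▸ hzsup
  · subst h
    have hmem := hA (P.concat hadj)
    rw [Walk.support_concat, List.mem_append] at hmem
    rcases hmem with h' | h'
    · exact (hPsup v1 h').1
    · exact absurd (List.mem_singleton.mp h') hne

private lemma aux_A1_nonempty {B0 : Set V} (hB : IsBlockSet G B0)
    {v1 v2 : V} (hv1 : v1 ∈ B0) (hv2 : v2 ∈ B0) (hne : v1 ≠ v2)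
    (hcut : CutVtx G v1) :
    ∃ x, x ∉ B0 ∧ ∀ p : G.Walk x v2, v1 ∈ p.support := by
  classical
  by_contra hcon
  push_neg at hcon
  apply hcut
  have hv2ne : v2 ∈ ({v1}ᶜ : Set V) := by simpa using hne.symm
  have hNE : Nonempty ↥({v1}ᶜ : Set V) := ⟨⟨v2, hv2ne⟩⟩
  refine SimpleGraph.Connected.mk ?_
  have key : ∀ c (hc : c ∈ ({v1}ᶜ : Set V)),
      (G.induce {v1}ᶜ).Reachable ⟨c, hc⟩ ⟨v2, hv2ne⟩ := by
    intro c hc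
    have hc' : c ≠ v1 := by simpa using hc
    by_cases hcB : c ∈ B0
    · obtain ⟨p, hp⟩ := aux_connOn_of_block_del hB.1 hv1 c ⟨hcB, hc'⟩ v2 ⟨hv2, hne.symm⟩
      exact aux_reach_induce p (fun v hv => by simpa using (hp v hv).2) hc hv2ne
    · obtain ⟨p, hp⟩ := hcon c hcB
      refine aux_reach_induce p (fun v hv => ?_) hc hv2ne
      simp only [Set.mem_compl_iff, Set.mem_singleton_iff]
      intro h; exact hp (h ▸ hv)
  rintro ⟨a, ha⟩ ⟨b, hb⟩
  exact (key a ha).trans (key b hb).symm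

end Part2
section Part3
variable {G : SimpleGraph V}

private lemma aux_dist_split (hconn : G.Connected) {x w v : V}
    (h : ∀ p : G.Walk x w, v ∈ p.support) :
    G.dist x w = G.dist x v + G.dist v w := by
  classical
  refine le_antisymm hconn.dist_triangle ?_
  obtain ⟨p, hp⟩ := hconn.exists_walk_length_eq_dist x w
  have hv := h p
  have hlen := congrArg Walk.length (p.take_spec hv)
  rw [Walk.length_append] at hlen
  have h1 := dist_le (p.takeUntil v hv)
  have h2 := dist_le (p.dropUntil v hv)
  omega

private lemma aux_adj_dist_le_one {x y : V} (h : G.Adj x y) : G.dist x y ≤ 1 := by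
  have := dist_le (Walk.cons h Walk.nil)
  simpa using this

private lemma aux_adj_dist (hconn : G.Connected) {x y : V} (h : G.Adj x y) :
    G.dist x y = 1 :=
  le_antisymm (aux_adj_dist_le_one h) (hconn.pos_dist_of_ne h.ne)

private lemma aux_dist_one_adj (hconn : G.Connected) {x y : V} (h : G.dist x y = 1) :
    G.Adj x y := by
  obtain ⟨p, hp⟩ := hconn.exists_walk_length_eq_dist x y
  rw [h] at hp
  cases p with
  | nil => simp at hp
  | @cons a c b h' q =>
    rw [Walk.length_cons] at hp
    have hq : q.length = 0 := by omega
    have := Walk.eq_of_length_eq_zero hq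
    exact this ▸ h'

private lemma aux_dist_two (hconn : G.Connected) {x y t : V} (hxy : x ≠ y)
    (hnadj : ¬ G.Adj x y) (h1 : G.Adj x t) (h2 : G.Adj t y) : G.dist x y = 2 := by
  have hle : G.dist x y ≤ 2 := by
    have := dist_le (Walk.cons h1 (Walk.cons h2 Walk.nil)); simpa using this
  have h0 : G.dist x y ≠ 0 := fun h => hxy (hconn.dist_eq_zero_iff.mp h)
  have hne1 : G.dist x y ≠ 1 := fun h => hnadj (aux_dist_one_adj hconn h)
  omega

private lemma aux_dist_le_ecc [Fintype V] (w x : V) : G.dist w x ≤ ecc G w :=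
  le_csSup (Set.Finite.bddAbove (Set.finite_range _)) ⟨x, rfl⟩

private lemma aux_ecc_le [Fintype V] {w : V} {N : ℕ} (h : ∀ x, G.dist w x ≤ N) :
    ecc G w ≤ N := by
  have : Nonempty V := ⟨w⟩
  apply csSup_le (Set.range_nonempty _)
  rintro _ ⟨x, rfl⟩
  exact h x

end Part3

theorem stmt_8 {V : Type*} [Fintype V] (G : SimpleGraph V) (hG : ClassB G)
    (h4 : 4 ≤ gdiam G) (B0 V1 V2 : Set V) (hB : IsBlockSet G B0)
    (hbip : CompBipOn G B0 V1 V2)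
    (v1 v2 : V) (hne : v1 ≠ v2) (hv : B0 ∩ cutSet G = {v1, v2})
    (hle : ecc G v1 ≤ ecc G v2)
    (u : V) (hu : u ∈ B0) (hnc : ¬ CutVtx G u) :
    (v1 ∈ V1 ∧ v2 ∈ V1 ∧ u ∈ V1 → ecc G u = ecc G v2) ∧
    (v1 ∈ V1 ∧ v2 ∈ V1 ∧ u ∈ V2 → ecc G u = ecc G v2 - 1) ∧
    (v1 ∈ V1 ∧ u ∈ V1 ∧ v2 ∈ V2 → ecc G u = ecc G v2 + 1) ∧
    (v1 ∈ V1 ∧ v2 ∈ V2 ∧ u ∈ V2 → ecc G u = ecc G v1 + 1) := by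
  classical
  have hGconn : G.Connected := hG.1.1
  have hv1m : v1 ∈ B0 ∩ cutSet G := by rw [hv]; simp
  have hv2m : v2 ∈ B0 ∩ cutSet G := by rw [hv]; simp
  have hv1B : v1 ∈ B0 := hv1m.1
  have hv2B : v2 ∈ B0 := hv2m.1
  have hv1cut : CutVtx G v1 := hv1m.2
  have hv2cut : CutVtx G v2 := hv2m.2
  have huv1 : u ≠ v1 := fun h => hnc (h ▸ hv1cut)
  have huv2 : u ≠ v2 := fun h => hnc (h ▸ hv2cut)
  have hcutonly : ∀ z, z ∈ B0 → CutVtx G z → z = v1 ∨ z = v2 := by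
    intro z hz hc
    have hzm : z ∈ B0 ∩ cutSet G := ⟨hz, hc⟩
    rw [hv] at hzm
    simpa using hzm
  have hcutonly' : ∀ z, z ∈ B0 → CutVtx G z → z = v2 ∨ z = v1 :=
    fun z hz hc => (hcutonly z hz hc).symm
  obtain ⟨hV1ne, hV2ne, hdisjV, hunion, hadjB⟩ := hbip
  have hV1B : ∀ z ∈ V1, z ∈ B0 := fun z hz => hunion ▸ Set.mem_union_left _ hz
  have hV2B : ∀ z ∈ V2, z ∈ B0 := fun z hz => hunion ▸ Set.mem_union_right _ hz
  obtain ⟨x1, hx1B, hx1A⟩ := aux_A1_nonempty hB hv1B hv2B hne hv1cut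
  obtain ⟨x2, hx2B, hx2A⟩ := aux_A1_nonempty hB hv2B hv1B hne.symm hv2cut
  set A1 : Set V := {x | x ∉ B0 ∧ ∀ p : G.Walk x v2, v1 ∈ p.support} with hA1def
  set A2 : Set V := {x | x ∉ B0 ∧ ∀ p : G.Walk x v1, v2 ∈ p.support} with hA2def
  have hx1 : x1 ∈ A1 := ⟨hx1B, hx1A⟩
  have hx2 : x2 ∈ A2 := ⟨hx2B, hx2A⟩
  set m1 : ℕ := sSup ((fun x => G.dist v1 x) '' A1) with hm1def
  set m2 : ℕ := sSup ((fun x => G.dist v2 x) '' A2) with hm2def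
  have hm1mem : ∃ x ∈ A1, G.dist v1 x = m1 := by
    obtain ⟨y, hy, hy'⟩ := Nat.sSup_mem (Set.Nonempty.image _ ⟨x1, hx1⟩)
      (Set.Finite.bddAbove ((A1.toFinite).image _))
    exact ⟨y, hy, hy'⟩
  have hm2mem : ∃ x ∈ A2, G.dist v2 x = m2 := by
    obtain ⟨y, hy, hy'⟩ := Nat.sSup_mem (Set.Nonempty.image _ ⟨x2, hx2⟩)
      (Set.Finite.bddAbove ((A2.toFinite).image _))
    exact ⟨y, hy, hy'⟩
  have hm1le : ∀ x ∈ A1, G.dist v1 x ≤ m1 := fun x hx =>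
    le_csSup (Set.Finite.bddAbove ((A1.toFinite).image _)) ⟨x, hx, rfl⟩
  have hm2le : ∀ x ∈ A2, G.dist v2 x ≤ m2 := fun x hx =>
    le_csSup (Set.Finite.bddAbove ((A2.toFinite).image _)) ⟨x, hx, rfl⟩
  obtain ⟨y1, hy1A, hy1d⟩ := hm1mem
  obtain ⟨y2, hy2A, hy2d⟩ := hm2mem
  have hm1pos : 1 ≤ m1 := by
    rw [← hy1d]
    exact hGconn.pos_dist_of_ne (fun h => hy1A.1 (h ▸ hv1B))
  have hm2pos : 1 ≤ m2 := by
    rw [← hy2d]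
    exact hGconn.pos_dist_of_ne (fun h => hy2A.1 (h ▸ hv2B))
  have hsplit1 : ∀ w ∈ B0, ∀ x ∈ A1, G.dist w x = G.dist w v1 + G.dist v1 x := by
    intro w hw x hxA
    have h := aux_dist_split hGconn
      (fun p => aux_A1_walk hB hv1B hv2B hne hcutonly hxA.1 hxA.2 hw p)
    calc G.dist w x = G.dist x w := dist_comm
      _ = G.dist x v1 + G.dist v1 w := h
      _ = G.dist w v1 + G.dist v1 x := by
          rw [dist_comm (u := x) (v := v1), dist_comm (u := v1) (v := w)]
          omega
  have hsplit2 : ∀ w ∈ B0, ∀ x ∈ A2, G.dist w x = G.dist w v2 + G.dist v2 x := by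
    intro w hw x hxA
    have h := aux_dist_split hGconn
      (fun p => aux_A1_walk hB hv2B hv1B hne.symm hcutonly' hxA.1 hxA.2 hw p)
    calc G.dist w x = G.dist x w := dist_comm
      _ = G.dist x v2 + G.dist v2 w := h
      _ = G.dist w v2 + G.dist v2 x := by
          rw [dist_comm (u := x) (v := v2), dist_comm (u := v2) (v := w)]
          omega
  have hpart : ∀ x, x ∉ B0 → x ∈ A1 ∨ x ∈ A2 := by
    intro x hx
    by_cases h : ∀ p : G.Walk x v2, v1 ∈ p.support
    · exact Or.inl ⟨hx, h⟩
    · exact Or.inr ⟨hx, aux_partition hB hv1B hv2B hne hcutonly hx h⟩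
  have hadj12 : ∀ a ∈ V1, ∀ b ∈ V2, G.Adj a b := fun a ha b hb =>
    (hadjB a (hV1B a ha) b (hV2B b hb)).mpr (Or.inl ⟨ha, hb⟩)
  have hnadjV1 : ∀ a ∈ V1, ∀ b ∈ V1, ¬ G.Adj a b := by
    intro a ha b hb h
    rcases (hadjB a (hV1B a ha) b (hV1B b hb)).mp h with ⟨_, h2⟩ | ⟨h2, _⟩
    · exact (Set.disjoint_left.mp hdisjV hb) h2
    · exact (Set.disjoint_left.mp hdisjV ha) h2
  have hnadjV2 : ∀ a ∈ V2, ∀ b ∈ V2, ¬ G.Adj a b := by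
    intro a ha b hb h
    rcases (hadjB a (hV2B a ha) b (hV2B b hb)).mp h with ⟨h2, _⟩ | ⟨_, h2⟩
    · exact (Set.disjoint_left.mp hdisjV h2) ha
    · exact (Set.disjoint_left.mp hdisjV h2) hb
  have hdV1 : ∀ a ∈ V1, ∀ b ∈ V1, a ≠ b → G.dist a b = 2 := by
    intro a ha b hb hab
    obtain ⟨t2, ht2⟩ := hV2ne
    exact aux_dist_two hGconn hab (hnadjV1 a ha b hb) (hadj12 a ha t2 ht2)
      ((hadj12 b hb t2 ht2).symm)
  have hdV2 : ∀ a ∈ V2, ∀ b ∈ V2, a ≠ b → G.dist a b = 2 := by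
    intro a ha b hb hab
    obtain ⟨t1, ht1⟩ := hV1ne
    exact aux_dist_two hGconn hab (hnadjV2 a ha b hb) ((hadj12 t1 ht1 a ha).symm)
      (hadj12 t1 ht1 b hb)
  have hd1 : ∀ a ∈ V1, ∀ b ∈ V2, G.dist a b = 1 := fun a ha b hb =>
    aux_adj_dist hGconn (hadj12 a ha b hb)
  have hd1' : ∀ a ∈ V2, ∀ b ∈ V1, G.dist a b = 1 := fun a ha b hb =>
    aux_adj_dist hGconn ((hadj12 b hb a ha).symm)
  have hintra : ∀ x ∈ B0, ∀ y ∈ B0, G.dist x y ≤ 2 := by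
    intro x hx y hy
    have hx' : x ∈ V1 ∪ V2 := hunion.symm ▸ hx
    have hy' : y ∈ V1 ∪ V2 := hunion.symm ▸ hy
    obtain ⟨t1, ht1⟩ := hV1ne
    obtain ⟨t2, ht2⟩ := hV2ne
    rcases hx' with hx1 | hx2 <;> rcases hy' with hy1 | hy2
    · have := dist_le (Walk.cons (hadj12 x hx1 t2 ht2)
        (Walk.cons ((hadj12 y hy1 t2 ht2).symm) Walk.nil))
      simpa using this
    · exact le_trans (aux_adj_dist_le_one (hadj12 x hx1 y hy2)) (by omega)
    · exact le_trans (aux_adj_dist_le_one ((hadj12 y hy1 x hx2).symm)) (by omega)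
    · have := dist_le (Walk.cons ((hadj12 t1 ht1 x hx2).symm)
        (Walk.cons (hadj12 t1 ht1 y hy2) Walk.nil))
      simpa using this
  have hlow1 : ∀ w ∈ B0, G.dist w v1 + m1 ≤ ecc G w := by
    intro w hw
    have h := hsplit1 w hw y1 hy1A
    rw [hy1d] at h
    rw [← h]
    exact aux_dist_le_ecc w y1
  have hlow2 : ∀ w ∈ B0, G.dist w v2 + m2 ≤ ecc G w := by
    intro w hw
    have h := hsplit2 w hw y2 hy2A
    rw [hy2d] at h
    rw [← h]
    exact aux_dist_le_ecc w y2
  have hup : ∀ w ∈ B0,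
      ecc G w ≤ 2 ∨ ecc G w ≤ G.dist w v1 + m1 ∨ ecc G w ≤ G.dist w v2 + m2 := by
    intro w hw
    have h : ecc G w ≤ max 2 (max (G.dist w v1 + m1) (G.dist w v2 + m2)) := by
      apply aux_ecc_le
      intro x
      by_cases hxB : x ∈ B0
      · exact le_trans (hintra w hw x hxB) (le_max_left _ _)
      · rcases hpart x hxB with hxA | hxA
        · refine le_trans ?_ (le_trans (le_max_left _ _) (le_max_right _ _))
          rw [hsplit1 w hw x hxA]
          exact Nat.add_le_add_left (hm1le x hxA) _
        · refine le_trans ?_ (le_trans (le_max_right _ _) (le_max_right _ _))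
          rw [hsplit2 w hw x hxA]
          exact Nat.add_le_add_left (hm2le x hxA) _
    rcases le_max_iff.mp h with h' | h'
    · exact Or.inl h'
    · rcases le_max_iff.mp h' with h'' | h''
      · exact Or.inr (Or.inl h'')
      · exact Or.inr (Or.inr h'')
  have lu1 := hlow1 u hu
  have lu2 := hlow2 u hu
  have l11 := hlow1 v1 hv1B
  have l12 := hlow2 v1 hv1B
  have l21 := hlow1 v2 hv2B
  have l22 := hlow2 v2 hv2B
  have uu := hup u hu
  have uv1 := hup v1 hv1B
  have uv2 := hup v2 hv2B
  have hd11 : G.dist v1 v1 = 0 := dist_self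
  have hd22 : G.dist v2 v2 = 0 := dist_self
  rw [hd11] at l11 uv1
  rw [hd22] at l22 uv2
  refine ⟨?_, ?_, ?_, ?_⟩
  · rintro ⟨ha1, ha2, ha3⟩
    have hd12 : G.dist v1 v2 = 2 := hdV1 v1 ha1 v2 ha2 hne
    have hd21 : G.dist v2 v1 = 2 := hdV1 v2 ha2 v1 ha1 hne.symm
    have hduv1 : G.dist u v1 = 2 := hdV1 u ha3 v1 ha1 huv1
    have hduv2 : G.dist u v2 = 2 := hdV1 u ha3 v2 ha2 huv2
    rw [hduv1] at lu1 uu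
    rw [hduv2] at lu2 uu
    rw [hd12] at l12 uv1
    rw [hd21] at l21 uv2
    omega
  · rintro ⟨ha1, ha2, ha3⟩
    have hd12 : G.dist v1 v2 = 2 := hdV1 v1 ha1 v2 ha2 hne
    have hd21 : G.dist v2 v1 = 2 := hdV1 v2 ha2 v1 ha1 hne.symm
    have hduv1 : G.dist u v1 = 1 := hd1' u ha3 v1 ha1
    have hduv2 : G.dist u v2 = 1 := hd1' u ha3 v2 ha2
    rw [hduv1] at lu1 uu
    rw [hduv2] at lu2 uu
    rw [hd12] at l12 uv1
    rw [hd21] at l21 uv2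
    omega
  · rintro ⟨ha1, ha2, ha3⟩
    have hd12 : G.dist v1 v2 = 1 := hd1 v1 ha1 v2 ha3
    have hd21 : G.dist v2 v1 = 1 := hd1' v2 ha3 v1 ha1
    have hduv1 : G.dist u v1 = 2 := hdV1 u ha2 v1 ha1 huv1
    have hduv2 : G.dist u v2 = 1 := hd1 u ha2 v2 ha3
    rw [hduv1] at lu1 uu
    rw [hduv2] at lu2 uu
    rw [hd12] at l12 uv1
    rw [hd21] at l21 uv2
    omega
  · rintro ⟨ha1, ha2, ha3⟩
    have hd12 : G.dist v1 v2 = 1 := hd1 v1 ha1 v2 ha2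
    have hd21 : G.dist v2 v1 = 1 := hd1' v2 ha2 v1 ha1
    have hduv1 : G.dist u v1 = 1 := hd1' u ha3 v1 ha1
    have hduv2 : G.dist u v2 = 2 := hdV2 u ha3 v2 ha2 huv2
    rw [hduv1] at lu1 uu
    rw [hduv2] at lu2 uu
    rw [hd12] at l12 uv1
    rw [hd21] at l21 uv2
    omega
end

section
/- Let G be in class B with diam(G) ≥ 4, and let x be a vertex lying in partite set V1(B0) of a block B0. If x is a central vertex of G but not a cut-vertex of G, then B0 is a bridge block and both cut-vertices of G in B0 lie in V2(B0). -/
open SimpleGraph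

variable {V : Type*}

lemma induce_induce_conn_iff (G : SimpleGraph V) (s : Set V) (w : ↥s) :
    ((G.induce s).induce {w}ᶜ).Connected ↔ (G.induce (s \ {(w : V)})).Connected := by
  have iso : ((G.induce s).induce {w}ᶜ) ≃g (G.induce (s \ {(w : V)})) :=
    { toFun := fun z => ⟨z.1.1, z.1.2, fun h => z.2 (Subtype.ext h)⟩
      invFun := fun z => ⟨⟨z.1, z.2.1⟩, fun h => z.2.2 (congrArg Subtype.val h)⟩
      left_inv := fun z => by ext; rfl
      right_inv := fun z => by ext; rfl
      map_rel_iff' := Iff.rfl }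
  exact iso.connected_iff

lemma noCutVtx_iff (G : SimpleGraph V) (s : Set V) :
    NoCutVtx (G.induce s) ↔
      (G.induce s).Connected ∧ ∀ w ∈ s, (G.induce (s \ {w})).Connected := by
  unfold NoCutVtx
  refine and_congr_right fun _ => ?_
  constructor
  · intro h w hw
    exact (induce_induce_conn_iff G s ⟨w, hw⟩).mp (h ⟨w, hw⟩)
  · intro h w
    exact (induce_induce_conn_iff G s w).mpr (h w w.2)

lemma exists_cross {G : SimpleGraph V} {B0 : Set V} {a b : V} (p : G.Walk a b)
    (ha : a ∈ B0) (hb : b ∉ B0) :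
    ∃ u v, G.Adj u v ∧ u ∈ B0 ∧ v ∉ B0 ∧ u ∈ p.support := by
  induction p with
  | nil => exact absurd ha hb
  | @cons a c b h q ih =>
    by_cases hc : c ∈ B0
    · obtain ⟨u, v, h1, h2, h3, h4⟩ := ih hc hb
      exact ⟨u, v, h1, h2, h3, by simp [h4]⟩
    · exact ⟨a, c, h, ha, hc, by simp⟩

lemma path_cons {G : SimpleGraph V} {a c : V} (q : G.Walk a c) (hq : q.IsPath)
    (hac : a ≠ c) :
    ∃ (d : V) (h : G.Adj a d) (r : G.Walk d c), q = Walk.cons h r ∧ a ∉ r.support := by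
  cases q with
  | nil => exact absurd rfl hac
  | cons h r =>
    refine ⟨_, h, r, rfl, ?_⟩
    have := hq.support_nodup
    rw [Walk.support_cons] at this
    exact (List.nodup_cons.mp this).1

/-- initial-segment lemma: from `v ∉ B0` walking to `b ∈ B0` avoiding `u`,
there is a path from `v` to some `b' ∈ B0` avoiding `u` whose other support
vertices avoid `B0`. -/
lemma first_entry [DecidableEq V] {G : SimpleGraph V} {B0 : Set V} {u b : V} (hb : b ∈ B0) :
    ∀ {v : V} (q : G.Walk v b), v ∉ B0 → u ∉ q.support →
    ∃ (b' : V) (_ : b' ∈ B0) (p : G.Walk v b'), p.IsPath ∧ u ∉ p.support ∧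
      ∀ w ∈ p.support, w ≠ b' → w ∉ B0 := by
  intro v q
  induction q with
  | nil => intro hv _; exact absurd hb hv
  | @cons a c b h q ih =>
    intro hv hu
    rw [Walk.support_cons, List.mem_cons] at hu
    push_neg at hu
    by_cases hc : c ∈ B0
    · refine ⟨c, hc, Walk.cons h Walk.nil, ?_, ?_, ?_⟩
      · simp only [Walk.isPath_def, Walk.support_cons, Walk.support_nil]
        exact List.nodup_cons.mpr ⟨by simp only [List.mem_singleton]; exact fun hh => hv (hh ▸ hc), List.nodup_singleton c⟩
      · simp only [Walk.support_cons, Walk.support_nil, List.mem_cons, List.mem_singleton,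
          List.not_mem_nil, or_false]
        push_neg
        exact ⟨hu.1, fun hh : u = c => hu.2 (hh ▸ Walk.start_mem_support q)⟩
      · intro w hw hwc
        simp only [Walk.support_cons, Walk.support_nil, List.mem_cons,
          List.mem_singleton, List.not_mem_nil, or_false] at hw
        rcases hw with rfl | rfl
        · exact hv
        · exact absurd rfl hwc
    · obtain ⟨b', hb', p, hp, hup, hother⟩ := ih hb hc hu.2
      refine ⟨b', hb', (Walk.cons h p).toPath, (Walk.cons h p).toPath.2, ?_, ?_⟩
      · intro hmem
        have := (Walk.cons h p).support_toPath_subset hmem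
        rw [Walk.support_cons, List.mem_cons] at this
        rcases this with rfl | hmem'
        · exact hu.1 rfl
        · exact hup hmem'
      · intro w hw hwb
        have := (Walk.cons h p).support_toPath_subset hw
        rw [Walk.support_cons, List.mem_cons] at this
        rcases this with rfl | hmem'
        · exact hv
        · exact hother w hmem' hwb

lemma cross_cut [DecidableEq V] {G : SimpleGraph V} {B0 : Set V} (hB : IsBlockSet G B0)
    {u v : V} (hu : u ∈ B0) (hv : v ∉ B0) (ha : G.Adj u v) : CutVtx G u := by
  by_contra h
  rw [CutVtx, not_not] at h
  -- a second vertex of B0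
  have hBrem : (G.induce (B0 \ {u})).Connected :=
    ((noCutVtx_iff G B0).mp hB.1).2 u hu
  obtain ⟨⟨b, hbB, hbu⟩⟩ := hBrem.nonempty
  have hvu : v ≠ u := fun hh => hv (hh ▸ hu)
  -- a walk from v to b avoiding u
  rw [connected_induce_iff] at h
  obtain ⟨-, hwalk⟩ := (Subgraph.connected_iff_forall_exists_walk_subgraph _).mp h
  obtain ⟨q, hq⟩ := hwalk (u := v) (v := b)
    (by simpa using hvu) (by simpa using hbu)
  have husupp : u ∉ q.support := by
    intro hmem
    have h1 : u ∈ q.toSubgraph.verts := by rw [Walk.verts_toSubgraph]; exact hmem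
    have h2 := Subgraph.verts_mono hq h1
    simp at h2
  obtain ⟨b', hb', p, hp, hup, hother⟩ := first_entry hbB q hv husupp
  set S : Set V := {y | y ∈ p.support} with hSdef
  set C : Set V := B0 ∪ S with hCdef
  have hvS : v ∈ S := p.start_mem_support
  have hb'S : b' ∈ S := p.end_mem_support
  have hvb' : v ≠ b' := fun hh => hv (hh ▸ hb')
  have hub' : u ≠ b' := fun hh => hup (by rw [hh]; exact hb'S)
  have hBC : B0 = C := by
    refine hB.2 C Set.subset_union_left ?_
    rw [noCutVtx_iff]
    constructor
    · exact induce_union_connected hB.1.1.preconnected p.connected_induce_support.preconnected ⟨b', hb', hb'S⟩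
    · intro w hwC
      by_cases hwS : w ∈ S
      · by_cases hwb' : w = b'
        · subst hwb'
          obtain ⟨d, hd, r, hrev, hwr⟩ := path_cons p.reverse hp.reverse (Ne.symm hvb')
          have hsupr : ∀ y, y ∈ S ↔ y = w ∨ y ∈ r.support := by
            intro y
            have : y ∈ p.support ↔ y ∈ p.reverse.support := by
              rw [Walk.support_reverse, List.mem_reverse]
            rw [hSdef, Set.mem_setOf_eq, this, hrev, Walk.support_cons, List.mem_cons]
          have hset : C \ {w} = (B0 \ {w}) ∪ {y | y ∈ r.support} := by
            ext y
            simp only [hCdef, Set.mem_diff, Set.mem_union, Set.mem_singleton_iff,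
              Set.mem_setOf_eq]
            have := hsupr y
            constructor
            · rintro ⟨hy1 | hy2, hyw⟩
              · exact Or.inl ⟨hy1, hyw⟩
              · rcases this.mp hy2 with rfl | hyr
                · exact absurd rfl hyw
                · exact Or.inr hyr
            · rintro (⟨hy1, hyw⟩ | hyr)
              · exact ⟨Or.inl hy1, hyw⟩
              · refine ⟨Or.inr (this.mpr (Or.inr hyr)), ?_⟩
                rintro rfl; exact hwr hyr
          rw [hset]
          exact connected_induce_union
            (((noCutVtx_iff G B0).mp hB.1).2 w hb').preconnected
            r.connected_induce_support.preconnected ⟨hu, hub'⟩ r.end_mem_support ha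
        · have hwB0 : w ∉ B0 := hother w hwS hwb'
          by_cases hwv : w = v
          · subst hwv
            obtain ⟨d, hd, r, hpc, hwr⟩ := path_cons p hp hvb'
            have hsupr : ∀ y, y ∈ S ↔ y = w ∨ y ∈ r.support := by
              intro y
              rw [hSdef, Set.mem_setOf_eq, hpc, Walk.support_cons, List.mem_cons]
            have hset : C \ {w} = B0 ∪ {y | y ∈ r.support} := by
              ext y
              simp only [hCdef, Set.mem_diff, Set.mem_union, Set.mem_singleton_iff,
                Set.mem_setOf_eq]
              have := hsupr y
              constructor
              · rintro ⟨hy1 | hy2, hyw⟩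
                · exact Or.inl hy1
                · rcases this.mp hy2 with rfl | hyr
                  · exact absurd rfl hyw
                  · exact Or.inr hyr
              · rintro (hy1 | hyr)
                · exact ⟨Or.inl hy1, fun hh => hwB0 (hh ▸ hy1)⟩
                · exact ⟨Or.inr (this.mpr (Or.inr hyr)), fun hh => hwr (hh ▸ hyr)⟩
            rw [hset]
            exact induce_union_connected hB.1.1.preconnected r.connected_induce_support.preconnected
              ⟨b', hb', r.end_mem_support⟩
          · have hwsup : w ∈ p.support := hwS
            have hp1 : (p.takeUntil w hwsup).IsPath := hp.takeUntil hwsup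
            have hp2 : (p.dropUntil w hwsup).IsPath := hp.dropUntil hwsup
            obtain ⟨d1, hd1, r1, hrev1, hwr1⟩ :=
              path_cons (p.takeUntil w hwsup).reverse hp1.reverse hwv
            obtain ⟨d2, hd2, r2, hpc2, hwr2⟩ := path_cons (p.dropUntil w hwsup) hp2 hwb'
            have hmem1 : ∀ y, y ∈ (p.takeUntil w hwsup).support ↔ y = w ∨ y ∈ r1.support := by
              intro y
              have : y ∈ (p.takeUntil w hwsup).support ↔
                  y ∈ (p.takeUntil w hwsup).reverse.support := by
                rw [Walk.support_reverse, List.mem_reverse]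
              rw [this, hrev1, Walk.support_cons, List.mem_cons]
            have hmem2 : ∀ y, y ∈ (p.dropUntil w hwsup).support ↔ y = w ∨ y ∈ r2.support := by
              intro y
              rw [hpc2, Walk.support_cons, List.mem_cons]
            have hsupS : ∀ y, y ∈ S ↔
                y ∈ (p.takeUntil w hwsup).support ∨ y ∈ (p.dropUntil w hwsup).support := by
              intro y
              rw [hSdef, Set.mem_setOf_eq, ← Walk.mem_support_append_iff,
                Walk.take_spec p hwsup]
            have hset : C \ {w} = (B0 ∪ {y | y ∈ r2.support}) ∪ {y | y ∈ r1.support} := by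
              ext y
              simp only [hCdef, Set.mem_diff, Set.mem_union, Set.mem_singleton_iff,
                Set.mem_setOf_eq]
              have h1 := hmem1 y; have h2 := hmem2 y; have hS := hsupS y
              constructor
              · rintro ⟨hy1 | hy2, hyw⟩
                · exact Or.inl (Or.inl hy1)
                · rcases hS.mp hy2 with hyt | hyd
                  · rcases h1.mp hyt with rfl | hyr
                    · exact absurd rfl hyw
                    · exact Or.inr hyr
                  · rcases h2.mp hyd with rfl | hyr
                    · exact absurd rfl hyw
                    · exact Or.inl (Or.inr hyr)
              · rintro ((hy1 | hyr2) | hyr1)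
                · exact ⟨Or.inl hy1, fun hh => hwB0 (hh ▸ hy1)⟩
                · exact ⟨Or.inr (hS.mpr (Or.inr (h2.mpr (Or.inr hyr2)))),
                    fun hh => hwr2 (hh ▸ hyr2)⟩
                · exact ⟨Or.inr (hS.mpr (Or.inl (h1.mpr (Or.inr hyr1)))),
                    fun hh => hwr1 (hh ▸ hyr1)⟩
            rw [hset]
            refine connected_induce_union
              (induce_union_connected hB.1.1.preconnected r2.connected_induce_support.preconnected
                ⟨b', hb', r2.end_mem_support⟩).preconnected
              r1.connected_induce_support.preconnected (Or.inl hu) r1.end_mem_support ha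
      · have hwB : w ∈ B0 := hwC.elim id (fun hh => absurd hh hwS)
        have hset : C \ {w} = (B0 \ {w}) ∪ S := by
          ext y
          simp only [hCdef, Set.mem_diff, Set.mem_union, Set.mem_singleton_iff]
          constructor
          · rintro ⟨hy1 | hy2, hyw⟩
            · exact Or.inl ⟨hy1, hyw⟩
            · exact Or.inr hy2
          · rintro (⟨hy1, hyw⟩ | hy2)
            · exact ⟨Or.inl hy1, hyw⟩
            · exact ⟨Or.inr hy2, fun hh => hwS (hh ▸ hy2)⟩
        rw [hset]
        refine induce_union_connected (((noCutVtx_iff G B0).mp hB.1).2 w hwB).preconnected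
          p.connected_induce_support.preconnected ⟨b', ⟨hb', ?_⟩, hb'S⟩
        intro hh
        rw [Set.mem_singleton_iff] at hh
        exact hwS (hh ▸ hb'S)
  exact hv (hBC ▸ (Or.inr hvS : v ∈ C))

section MetricAux
variable {V : Type*}

lemma dist_le_ecc [Finite V] (G : SimpleGraph V) (z w : V) : G.dist z w ≤ ecc G z :=
  le_csSup (Set.Finite.bddAbove (Set.finite_range _)) ⟨w, rfl⟩

lemma ecc_exists [Finite V] [Nonempty V] (G : SimpleGraph V) (z : V) :
    ∃ w, ecc G z = G.dist z w := by
  obtain ⟨w, hw⟩ := (Set.range_nonempty (G.dist z)).csSup_mem (Set.finite_range _)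
  exact ⟨w, hw.symm⟩

lemma radius_le_ecc (G : SimpleGraph V) (z : V) : gradius G ≤ ecc G z :=
  csInf_le (OrderBot.bddBelow _) ⟨z, rfl⟩

lemma diam_exists [Finite V] [Nonempty V] (G : SimpleGraph V) :
    ∃ a, gdiam G = ecc G a := by
  obtain ⟨a, ha⟩ := (Set.range_nonempty (ecc G)).csSup_mem (Set.finite_range _)
  exact ⟨a, ha.symm⟩

end MetricAux

theorem stmt_9 {V : Type*} [Fintype V] (G : SimpleGraph V) (hG : ClassB G)
    (h4 : 4 ≤ gdiam G) (B0 V1 V2 : Set V) (hB : IsBlockSet G B0)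
    (hbip : CompBipOn G B0 V1 V2)
    (x : V) (hx1 : x ∈ V1) (hxc : x ∈ gcenter G) (hnc : ¬ CutVtx G x) :
    (B0 ∩ cutSet G).ncard = 2 ∧ B0 ∩ cutSet G ⊆ V2 := by
  classical
  have hne : Nonempty V := ⟨x⟩
  obtain ⟨⟨hconn, hbipall⟩, ⟨B1, B2, hB1, hB2, hB12⟩, hcut2⟩ := hG
  obtain ⟨hV1ne, hV2ne, hdisj, huni, hadj⟩ := hbip
  set K : Set V := B0 ∩ cutSet G with hKdef
  have hK2 : K.ncard ≤ 2 := hcut2 B0 hB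
  have hV1B : V1 ⊆ B0 := by rw [← huni]; exact Set.subset_union_left
  have hV2B : V2 ⊆ B0 := by rw [← huni]; exact Set.subset_union_right
  have hxB : x ∈ B0 := hV1B hx1
  have hKB : K ⊆ B0 := Set.inter_subset_left
  have hxK : x ∉ K := fun hh => hnc hh.2
  have hr : ecc G x = gradius G := hxc
  have adj12 : ∀ a ∈ V1, ∀ b ∈ V2, G.Adj a b := fun a ha b hb =>
    (hadj a (hV1B ha) b (hV2B hb)).mpr (Or.inl ⟨ha, hb⟩)
  -- distances inside the block
  have hDB : ∀ a ∈ B0, ∀ b ∈ B0, G.dist a b ≤ 2 := by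
    intro a ha b hb
    have ha' : a ∈ V1 ∪ V2 := by rw [huni]; exact ha
    have hb' : b ∈ V1 ∪ V2 := by rw [huni]; exact hb
    rcases ha' with ha1 | ha2 <;> rcases hb' with hb1 | hb2
    · by_cases hab : a = b
      · subst hab; simp [SimpleGraph.dist_self]
      · obtain ⟨v2, hv2⟩ := hV2ne
        have := SimpleGraph.dist_le
          (Walk.cons (adj12 a ha1 v2 hv2) (Walk.cons (adj12 b hb1 v2 hv2).symm Walk.nil))
        simpa using this
    · calc G.dist a b ≤ 1 := le_of_eq (dist_eq_one_iff_adj.mpr (adj12 a ha1 b hb2))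
        _ ≤ 2 := by omega
    · calc G.dist a b ≤ 1 :=
          le_of_eq (dist_eq_one_iff_adj.mpr (adj12 b hb1 a ha2).symm)
        _ ≤ 2 := by omega
    · by_cases hab : a = b
      · subst hab; simp [SimpleGraph.dist_self]
      · obtain ⟨v1, hv1⟩ := hV1ne
        have := SimpleGraph.dist_le
          (Walk.cons (adj12 v1 hv1 a ha2).symm (Walk.cons (adj12 v1 hv1 b hb2) Walk.nil))
        simpa using this
  have hxV2 : x ∉ V2 := Set.disjoint_left.mp hdisj hx1
  have hdistxV2 : ∀ k ∈ V2, G.dist x k = 1 := fun k hk =>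
    dist_eq_one_iff_adj.mpr (adj12 x hx1 k hk)
  have hdistxV1 : ∀ k ∈ V1, k ≠ x → G.dist x k = 2 := by
    intro k hk hkx
    have hnadj : ¬ G.Adj x k := by
      rw [hadj x hxB k (hV1B hk)]
      rintro (⟨h1, h2⟩ | ⟨h1, h2⟩)
      · exact (Set.disjoint_left.mp hdisj hk) h2
      · exact hxV2 h1
    have hpos : 0 < G.dist x k := hconn.pos_dist_of_ne (Ne.symm hkx)
    have hne1 : G.dist x k ≠ 1 := fun h => hnadj (dist_eq_one_iff_adj.mp h)
    have hle : G.dist x k ≤ 2 := hDB x hxB k (hV1B hk)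
    omega
  -- shortest paths out of B0 go through a cut vertex of B0
  have hSP : ∀ w, w ∉ B0 → ∃ k ∈ K, G.dist x k + G.dist k w ≤ G.dist x w := by
    intro w hw
    obtain ⟨p, hplen⟩ := (hconn.preconnected x w).exists_walk_length_eq_dist
    obtain ⟨u', v', hadj', hu', hv', hmem⟩ := exists_cross p hxB hw
    have hcut : u' ∈ cutSet G := cross_cut hB hu' hv' hadj'
    refine ⟨u', ⟨hu', hcut⟩, ?_⟩
    have h1 : G.dist x u' ≤ (p.takeUntil u' hmem).length := SimpleGraph.dist_le _
    have h2 : G.dist u' w ≤ (p.dropUntil u' hmem).length := SimpleGraph.dist_le _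
    have h3 : (p.takeUntil u' hmem).length + (p.dropUntil u' hmem).length = p.length := by
      rw [← Walk.length_append, Walk.take_spec]
    omega
  -- B0 is not everything, and K is nonempty
  have hBne : B0 ≠ Set.univ := by
    intro hBu
    have hNC : NoCutVtx (G.induce Set.univ) := by rw [← hBu]; exact hB.1
    have h1 : B1 = Set.univ := hB1.2 Set.univ (Set.subset_univ _) hNC
    have h2 : B2 = Set.univ := hB2.2 Set.univ (Set.subset_univ _) hNC
    exact hB12 (h1.trans h2.symm)
  have hKne : K.Nonempty := by
    obtain ⟨w, hw⟩ := Set.ne_univ_iff_exists_notMem B0 |>.mp hBne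
    obtain ⟨k, hk, -⟩ := hSP w hw
    exact ⟨k, hk⟩
  -- the radius is at least 2
  have hr2 : 2 ≤ gradius G := by
    obtain ⟨a, hda⟩ := diam_exists G
    obtain ⟨b, hab⟩ := ecc_exists G a
    have h1 : G.dist a b ≤ G.dist a x + G.dist x b := hconn.dist_triangle
    have h2 : G.dist a x = G.dist x a := SimpleGraph.dist_comm ..
    have h3 : G.dist x a ≤ ecc G x := dist_le_ecc G x a
    have h4 : G.dist x b ≤ ecc G x := dist_le_ecc G x b
    omega
  -- the main eccentricity comparison
  have hmain : ∀ z ∈ B0, (∀ k ∈ K, G.dist z k < G.dist x k) → 3 ≤ gradius G → False := by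
    intro z hz hzk hr3
    have hlt : ∀ w, G.dist z w < gradius G := by
      intro w
      by_cases hwB : w ∈ B0
      · have := hDB z hz w hwB; omega
      · obtain ⟨k, hk, hle⟩ := hSP w hwB
        have ht : G.dist z w ≤ G.dist z k + G.dist k w := hconn.dist_triangle
        have h4 : G.dist x w ≤ ecc G x := dist_le_ecc G x w
        have h5 := hzk k hk
        omega
    obtain ⟨w0, hw0⟩ := ecc_exists G z
    have h6 := radius_le_ecc G z
    have h7 := hlt w0
    omega
  by_cases hr3 : 3 ≤ gradius G
  · -- radius at least 3
    have hKV1 : ∀ c ∈ K, c ∉ V1 := by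
      intro c hc hcV1
      have hcx : c ≠ x := fun hh => hxK (hh ▸ hc)
      have hdxc : G.dist x c = 2 := hdistxV1 c hcV1 hcx
      by_cases hsing : ∀ k ∈ K, k = c
      · refine hmain c (hKB hc) ?_ hr3
        intro k hk
        rw [hsing k hk, SimpleGraph.dist_self, hdxc]; omega
      · push_neg at hsing
        obtain ⟨c', hc', hcc'⟩ := hsing
        have hall : ∀ k ∈ K, k = c ∨ k = c' := by
          intro k hk
          by_contra hcon
          push_neg at hcon
          have hsub : ({c, c', k} : Set V) ⊆ K := by
            intro y hy
            rcases hy with rfl | rfl | rfl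
            exacts [hc, hc', hk]
          have hcard : ({c, c', k} : Set V).ncard = 3 := by
            rw [Set.ncard_insert_of_notMem (by simp [Ne.symm hcc', Ne.symm hcon.1]),
              Set.ncard_insert_of_notMem (by simp [Ne.symm hcon.2]), Set.ncard_singleton]
          have := Set.ncard_le_ncard hsub K.toFinite
          omega
        have hc'x : c' ≠ x := fun hh => hxK (hh ▸ hc')
        have hc'B : c' ∈ B0 := hKB hc'
        have hc'12 : c' ∈ V1 ∪ V2 := by rw [huni]; exact hc'B
        rcases hc'12 with hc'1 | hc'2
        · obtain ⟨v, hv⟩ := hV2ne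
          refine hmain v (hV2B hv) ?_ hr3
          intro k hk
          rcases hall k hk with rfl | rfl
          · have h1 : G.dist v k ≤ 1 :=
              le_of_eq (dist_eq_one_iff_adj.mpr (adj12 k hcV1 v hv).symm)
            rw [hdxc]; omega
          · have h1 : G.dist v k ≤ 1 :=
              le_of_eq (dist_eq_one_iff_adj.mpr (adj12 k hc'1 v hv).symm)
            rw [hdistxV1 k hc'1 hc'x]; omega
        · refine hmain c' (hV2B hc'2) ?_ hr3
          intro k hk
          rcases hall k hk with rfl | rfl
          · have h1 : G.dist c' k ≤ 1 :=
              le_of_eq (dist_eq_one_iff_adj.mpr (adj12 k hcV1 c' hc'2).symm)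
            rw [hdxc]; omega
          · rw [SimpleGraph.dist_self, hdistxV2 k hc'2]; omega
    have hKV2 : K ⊆ V2 := by
      intro k hk
      have : k ∈ V1 ∪ V2 := by rw [huni]; exact hKB hk
      rcases this with h | h
      · exact absurd h (hKV1 k hk)
      · exact h
    refine ⟨?_, hKV2⟩
    have hpos : 0 < K.ncard := (Set.ncard_pos K.toFinite).mpr hKne
    by_cases h1 : K.ncard = 1
    · obtain ⟨c, hc⟩ := Set.ncard_eq_one.mp h1
      have hcK : c ∈ K := by rw [hc]; exact rfl
      have hcx : c ≠ x := fun hh => hxK (hh ▸ hcK)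
      exfalso
      refine hmain c (hKB hcK) ?_ hr3
      intro k hk
      have : k = c := by rw [hc] at hk; exact hk
      subst this
      rw [SimpleGraph.dist_self]
      exact hconn.pos_dist_of_ne (Ne.symm hcx)
    · omega
  · -- radius exactly 2
    have hg2 : gradius G = 2 := by omega
    have houter : ∀ w, w ∉ B0 → ∃ k, k ∈ K ∧ k ∈ V2 ∧ G.dist k w = 1 := by
      intro w hw
      obtain ⟨k, hk, hle⟩ := hSP w hw
      have h1 : G.dist x w ≤ 2 := by
        have := dist_le_ecc G x w; rw [hr, hg2] at this; exact this
      have hkx : k ≠ x := fun hh => hxK (hh ▸ hk)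
      have hpos1 : 0 < G.dist x k := hconn.pos_dist_of_ne (Ne.symm hkx)
      have hkw : k ≠ w := fun hh => hw (hh ▸ hKB hk)
      have hpos2 : 0 < G.dist k w := hconn.pos_dist_of_ne hkw
      have hxk1 : G.dist x k = 1 := by omega
      have hkV2 : k ∈ V2 := by
        have hadjxk := dist_eq_one_iff_adj.mp hxk1
        rcases (hadj x hxB k (hKB hk)).mp hadjxk with ⟨-, h2⟩ | ⟨h1', -⟩
        · exact h2
        · exact absurd h1' hxV2
      exact ⟨k, hk, hkV2, by omega⟩
    obtain ⟨a, hda⟩ := diam_exists G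
    obtain ⟨b, hab⟩ := ecc_exists G a
    have hd4 : 4 ≤ G.dist a b := by rw [← hab, ← hda]; exact h4
    have hxa : G.dist x a ≤ 2 := by
      have := dist_le_ecc G x a; rw [hr, hg2] at this; exact this
    have hxb : G.dist x b ≤ 2 := by
      have := dist_le_ecc G x b; rw [hr, hg2] at this; exact this
    have haB : a ∉ B0 := by
      intro haB0
      by_cases hbB : b ∈ B0
      · have := hDB a haB0 b hbB; omega
      · obtain ⟨k, hk, hkV2, hk1⟩ := houter b hbB
        have h1 : G.dist a b ≤ G.dist a k + G.dist k b := hconn.dist_triangle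
        have h2 : G.dist a k ≤ 2 := hDB a haB0 k (hKB hk)
        omega
    have hbB : b ∉ B0 := by
      intro hbB0
      obtain ⟨k, hk, hkV2, hk1⟩ := houter a haB
      have h1 : G.dist b a ≤ G.dist b k + G.dist k a := hconn.dist_triangle
      have h2 : G.dist b k ≤ 2 := hDB b hbB0 k (hKB hk)
      have h3 : G.dist b a = G.dist a b := SimpleGraph.dist_comm ..
      have h4 : G.dist k a = G.dist a k := SimpleGraph.dist_comm ..
      omega
    obtain ⟨ka, hka, hkaV2, hka1⟩ := houter a haB
    obtain ⟨kb, hkb, hkbV2, hkb1⟩ := houter b hbB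
    have h1 : G.dist a b ≤ G.dist a ka + G.dist ka b := hconn.dist_triangle
    have h2 : G.dist ka b ≤ G.dist ka kb + G.dist kb b := hconn.dist_triangle
    have h3 : G.dist ka kb ≤ 2 := hDB ka (hKB hka) kb (hKB hkb)
    have h4 : G.dist a ka = G.dist ka a := SimpleGraph.dist_comm ..
    have hne' : ka ≠ kb := by
      intro hh
      subst hh
      rw [SimpleGraph.dist_self] at *
      omega
    have hKeq : ({ka, kb} : Set V) = K := by
      refine Set.eq_of_subset_of_ncard_le ?_ ?_ K.toFinite
      · intro y hy
        rcases hy with rfl | rfl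
        exacts [hka, hkb]
      · rw [Set.ncard_pair hne']
        exact hK2
    constructor
    · rw [← hKeq, Set.ncard_pair hne']
    · rw [← hKeq]
      intro y hy
      rcases hy with rfl | rfl
      exacts [hkaV2, hkbV2]
end
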